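/- Let f ∈ ℝ[X₁,…,Xₙ] with f(0) = 0 and 0 an isolated real critical point of f, and suppose R > 0 is a faithful radius of 0. Then 0 is a saddle point of f if and only if f_R^max > 0 and f_R^min < 0. -/

import Mathlib

open MvPolynomial Metric Set

noncomputable section

/-- The gradient of a real polynomial `f`, as a map on `ℝⁿ`. -/
def grad {n : ℕ} (f : MvPolynomial (Fin n) ℝ) (x : EuclideanSpace ℝ (Fin n)) :
    EuclideanSpace ℝ (Fin n) :=
  WithLp.toLp 2 (fun i => eval (fun j => x j) (pderiv i f))

/-- Evaluation of a polynomial as a function on `ℝⁿ`. -/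
def evalP {n : ℕ} (f : MvPolynomial (Fin n) ℝ) (x : EuclideanSpace ℝ (Fin n)) : ℝ :=
  eval (fun j => x j) f

/-- The tangency variety `Γ_ℝ(f) = {x | ∃ λ, ∇f(x) = λ x}`. -/
def Gamma {n : ℕ} (f : MvPolynomial (Fin n) ℝ) : Set (EuclideanSpace ℝ (Fin n)) :=
  {x | ∃ l : ℝ, grad f x = l • x}

/-- The set of real critical points `Crit_ℝ(f) = {x | ∇f(x) = 0}`. -/
def Crit {n : ℕ} (f : MvPolynomial (Fin n) ℝ) : Set (EuclideanSpace ℝ (Fin n)) :=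
  {x | grad f x = 0}

/-- `f_r^min`: the minimum of `f` over the closed ball `B_r` (attained, since `B_r`
is compact and `f` is continuous). -/
def fmin {n : ℕ} (f : MvPolynomial (Fin n) ℝ) (r : ℝ) : ℝ :=
  sInf (evalP f '' closedBall (0 : EuclideanSpace ℝ (Fin n)) r)

/-- `f_r^max`: the maximum of `f` over the closed ball `B_r`. -/
def fmax {n : ℕ} (f : MvPolynomial (Fin n) ℝ) (r : ℝ) : ℝ :=
  sSup (evalP f '' closedBall (0 : EuclideanSpace ℝ (Fin n)) r)

/-- `R` is a faithful radius of the critical point `0` of `f`: it is an isolation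
radius, `Γ_ℝ(f) ∩ B_R` is connected, and `Γ_ℝ(f) ∩ f⁻¹(0) ∩ B_R = {0}`. -/
def IsFaithfulRadius {n : ℕ} (f : MvPolynomial (Fin n) ℝ) (R : ℝ) : Prop :=
  0 < R ∧ Crit f ∩ closedBall (0 : EuclideanSpace ℝ (Fin n)) R = {0} ∧
    IsConnected (Gamma f ∩ closedBall (0 : EuclideanSpace ℝ (Fin n)) R) ∧
    Gamma f ∩ {x | evalP f x = 0} ∩ closedBall (0 : EuclideanSpace ℝ (Fin n)) R = {0}

/-- The differential of `evalP f` at `x`, as a continuous linear map. -/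
def gradD {n : ℕ} (f : MvPolynomial (Fin n) ℝ) (x : EuclideanSpace ℝ (Fin n)) :
    EuclideanSpace ℝ (Fin n) →L[ℝ] ℝ :=
  ∑ i : Fin n, eval (fun j => x j) (pderiv i f) • EuclideanSpace.proj i

lemma gradD_apply {n : ℕ} (f : MvPolynomial (Fin n) ℝ) (x v : EuclideanSpace ℝ (Fin n)) :
    gradD f x v = ∑ i : Fin n, eval (fun j => x j) (pderiv i f) * v i := by
  simp [gradD]

lemma hasStrictFDerivAt_evalP {n : ℕ} (f : MvPolynomial (Fin n) ℝ)
    (x : EuclideanSpace ℝ (Fin n)) : HasStrictFDerivAt (evalP f) (gradD f x) x := by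
  induction f using MvPolynomial.induction_on with
  | C a =>
      have h1 : gradD (C a : MvPolynomial (Fin n) ℝ) x = 0 := by
        simp [gradD]
      rw [h1]
      have h2 : evalP (C a : MvPolynomial (Fin n) ℝ) = fun _ => a := by
        funext y; simp [evalP]
      rw [h2]
      exact hasStrictFDerivAt_const a x
  | add p q hp hq =>
      have h1 : gradD (p + q) x = gradD p x + gradD q x := by
        simp [gradD, add_smul, Finset.sum_add_distrib]
      rw [h1]
      have he : evalP (p + q) = fun y => evalP p y + evalP q y := by
        funext y; simp [evalP]
      rw [he]
      exact hp.add hq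
  | mul_X p j hp =>
      have he : evalP (p * X j) = fun y => evalP p y * y j := by
        funext y; simp [evalP]
      have hXj : HasStrictFDerivAt (fun y : EuclideanSpace ℝ (Fin n) => y j)
          (EuclideanSpace.proj j : EuclideanSpace ℝ (Fin n) →L[ℝ] ℝ) x := by
        exact (EuclideanSpace.proj j : EuclideanSpace ℝ (Fin n) →L[ℝ] ℝ).hasStrictFDerivAt
      have hm := hp.mul hXj
      rw [he]
      refine hm.congr_fderiv (Eq.symm ?_)
      refine ContinuousLinearMap.ext fun v => ?_
      simp only [gradD, ContinuousLinearMap.coe_sum', Finset.sum_apply,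
        ContinuousLinearMap.smul_apply, ContinuousLinearMap.add_apply,
        PiLp.proj_apply, smul_eq_mul, evalP]
      have key : ∀ i : Fin n, eval (fun j' => x j') (pderiv i (p * X j)) * v i
          = (if i = j then eval (fun j' => x j') p * v i else 0)
            + x j * (eval (fun j' => x j') (pderiv i p) * v i) := by
        intro i
        rw [pderiv_mul]
        by_cases h : i = j
        · subst h; simp [pderiv_X_self]; ring
        · simp [pderiv_X_of_ne (Ne.symm h), h]; ring
      rw [Finset.sum_congr rfl (fun i _ => key i), Finset.sum_add_distrib,
        Finset.sum_ite_eq' Finset.univ j, ← Finset.mul_sum]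
      simp [add_comm]

lemma continuous_evalP {n : ℕ} (f : MvPolynomial (Fin n) ℝ) : Continuous (evalP f) :=
  continuous_iff_continuousAt.2 fun x =>
    (hasStrictFDerivAt_evalP f x).hasFDerivAt.continuousAt

lemma gradD_single {n : ℕ} (f : MvPolynomial (Fin n) ℝ) (x : EuclideanSpace ℝ (Fin n))
    (k : Fin n) : gradD f x (EuclideanSpace.single k (1 : ℝ)) = grad f x k := by
  rw [gradD_apply]
  simp [grad, EuclideanSpace.single_apply]

/-- The square-norm constraint function. -/
def sqn {n : ℕ} (y : EuclideanSpace ℝ (Fin n)) : ℝ := ∑ i : Fin n, y i * y i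

lemma sqn_eq {n : ℕ} (y : EuclideanSpace ℝ (Fin n)) : Real.sqrt (sqn y) = ‖y‖ := by
  unfold sqn
  rw [EuclideanSpace.norm_eq]
  congr 1
  refine Finset.sum_congr rfl fun i _ => ?_
  rw [Real.norm_eq_abs, sq_abs, sq]

lemma hasStrictFDerivAt_sqn {n : ℕ} (x : EuclideanSpace ℝ (Fin n)) :
    HasStrictFDerivAt sqn
      (∑ i : Fin n, (2 * x i) • (EuclideanSpace.proj i : EuclideanSpace ℝ (Fin n) →L[ℝ] ℝ)) x := by
  have h : ∀ i : Fin n, i ∈ Finset.univ → HasStrictFDerivAt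
      (fun y : EuclideanSpace ℝ (Fin n) => y i * y i)
      ((2 * x i) • (EuclideanSpace.proj i : EuclideanSpace ℝ (Fin n) →L[ℝ] ℝ)) x := by
    intro i _
    have hXi : HasStrictFDerivAt (fun y : EuclideanSpace ℝ (Fin n) => y i)
        (EuclideanSpace.proj i : EuclideanSpace ℝ (Fin n) →L[ℝ] ℝ) x :=
      (EuclideanSpace.proj i : EuclideanSpace ℝ (Fin n) →L[ℝ] ℝ).hasStrictFDerivAt
    have := hXi.mul hXi
    refine this.congr_fderiv (Eq.symm ?_)
    refine ContinuousLinearMap.ext fun v => ?_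
    simp only [ContinuousLinearMap.add_apply, ContinuousLinearMap.smul_apply,
      PiLp.proj_apply, smul_eq_mul]
    ring
  have hs : sqn = (∑ i : Fin n, fun y : EuclideanSpace ℝ (Fin n) => y i * y i) := by
    funext y; simp [sqn]
  rw [hs]
  exact HasStrictFDerivAt.sum h

/-- Any extremizer of `f` on `B_R` with nonzero value lies on the tangency variety. -/
lemma extr_mem_Gamma {n : ℕ} (f : MvPolynomial (Fin n) ℝ) {R : ℝ} (hRpos : 0 < R)
    (hcrit : Crit f ∩ closedBall (0 : EuclideanSpace ℝ (Fin n)) R = {0})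
    (hf0 : evalP f 0 = 0) {x : EuclideanSpace ℝ (Fin n)}
    (hx : x ∈ closedBall (0 : EuclideanSpace ℝ (Fin n)) R)
    (hextr : IsExtrOn (evalP f) (closedBall (0 : EuclideanSpace ℝ (Fin n)) R) x)
    (hfx : evalP f x ≠ 0) : x ∈ Gamma f := by
  have hxne : x ≠ 0 := by
    rintro rfl; exact hfx hf0
  have hxR : ‖x‖ ≤ R := mem_closedBall_zero_iff.1 hx
  -- the extremizer cannot be an interior point
  have hnorm : ‖x‖ = R := by
    by_contra h
    have hlt : ‖x‖ < R := lt_of_le_of_ne hxR h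
    have hmem : closedBall (0 : EuclideanSpace ℝ (Fin n)) R ∈ nhds x :=
      Filter.mem_of_superset (isOpen_ball.mem_nhds (mem_ball_zero_iff.2 hlt)) ball_subset_closedBall
    have hloc : IsLocalExtr (evalP f) x := hextr.isLocalExtr hmem
    have hD : gradD f x = 0 :=
      hloc.hasFDerivAt_eq_zero (hasStrictFDerivAt_evalP f x).hasFDerivAt
    have hg : grad f x = 0 := by
      ext k
      have := gradD_single f x k
      rw [hD] at this
      simpa using this.symm
    have : x ∈ Crit f ∩ closedBall (0 : EuclideanSpace ℝ (Fin n)) R := ⟨hg, hx⟩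
    rw [hcrit] at this
    exact hxne this
  -- Lagrange multipliers on the sphere
  have hlevel : {y : EuclideanSpace ℝ (Fin n) | sqn y = sqn x}
      ⊆ closedBall (0 : EuclideanSpace ℝ (Fin n)) R := by
    intro y hy
    have : Real.sqrt (sqn y) = Real.sqrt (sqn x) := by rw [hy]
    rw [sqn_eq, sqn_eq, hnorm] at this
    exact mem_closedBall_zero_iff.2 this.le
  have hextrOn : IsLocalExtrOn (evalP f) {y : EuclideanSpace ℝ (Fin n) | sqn y = sqn x} x := by
    rcases hextr with hmin | hmax
    · exact Or.inl (IsMinOn.localize (IsMinOn.on_subset hmin hlevel))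
    · exact Or.inr (IsMaxOn.localize (IsMaxOn.on_subset hmax hlevel))
  obtain ⟨a, b, hab, heq⟩ :=
    hextrOn.exists_multipliers_of_hasStrictFDerivAt_1d (hasStrictFDerivAt_sqn x)
      (hasStrictFDerivAt_evalP f x)
  have hkey : ∀ k : Fin n, a * (2 * x k) + b * grad f x k = 0 := by
    intro k
    have := congrArg (fun L : EuclideanSpace ℝ (Fin n) →L[ℝ] ℝ =>
      L (EuclideanSpace.single k (1 : ℝ))) heq
    simp only [ContinuousLinearMap.add_apply, ContinuousLinearMap.smul_apply,
      ContinuousLinearMap.zero_apply, smul_eq_mul] at this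
    rw [gradD_single] at this
    have hsum : (∑ i : Fin n, (2 * x i) •
        (EuclideanSpace.proj i : EuclideanSpace ℝ (Fin n) →L[ℝ] ℝ))
        (EuclideanSpace.single k (1 : ℝ)) = 2 * x k := by
      simp [EuclideanSpace.single_apply]
    rw [hsum] at this
    exact this
  have hbne : b ≠ 0 := by
    rintro rfl
    have hane : a ≠ 0 := by
      intro ha; exact hab (by simp [ha])
    have hx0 : x = 0 := by
      ext k
      have := hkey k
      have : a * (2 * x k) = 0 := by linarith [this]
      rcases mul_eq_zero.1 this with h | h
      · exact absurd h hane
      · simpa using mul_eq_zero.1 h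
    exact hxne hx0
  refine ⟨-(2 * a / b), ?_⟩
  ext k
  have hk := hkey k
  have : grad f x k = -(2 * a / b) * x k := by
    field_simp at hk ⊢
    linarith [hk]
  simpa [PiLp.smul_apply, smul_eq_mul] using this


/-- If `0` is an isolated real critical point of `f` with `f(0) = 0` and `R` is a
faithful radius of `0`, then `0` is a saddle point of `f` (neither a local minimizer nor a local maximizer) iff `f_R^max > 0` and `f_R^min < 0`. -/
theorem stmt6 (n : ℕ) (f : MvPolynomial (Fin n) ℝ)
    (hf0 : evalP f 0 = 0) (hgrad : grad f 0 = 0)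
    (hiso : ∃ O ∈ nhds (0 : EuclideanSpace ℝ (Fin n)), Crit f ∩ O = {0})
    (R : ℝ) (hR : IsFaithfulRadius f R) :
    (¬ IsLocalMin (evalP f) 0 ∧ ¬ IsLocalMax (evalP f) 0) ↔ (0 < fmax f R ∧ fmin f R < 0) := by
  obtain ⟨hRpos, hcrit, hconn, hfaith⟩ := hR
  have hcont : Continuous (evalP f) := continuous_evalP f
  have hcomp : IsCompact (closedBall (0 : EuclideanSpace ℝ (Fin n)) R) :=
    isCompact_closedBall _ _
  have hne : (closedBall (0 : EuclideanSpace ℝ (Fin n)) R).Nonempty :=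
    ⟨0, mem_closedBall_self hRpos.le⟩
  obtain ⟨xm, hxm, hminOn⟩ := hcomp.exists_isMinOn hne hcont.continuousOn
  obtain ⟨xM, hxM, hmaxOn⟩ := hcomp.exists_isMaxOn hne hcont.continuousOn
  have hfminE : fmin f R = evalP f xm :=
    IsLeast.csInf_eq ⟨⟨xm, hxm, rfl⟩, by rintro y ⟨z, hz, rfl⟩; exact hminOn hz⟩
  have hfmaxE : fmax f R = evalP f xM :=
    IsGreatest.csSup_eq ⟨⟨xM, hxM, rfl⟩, by rintro y ⟨z, hz, rfl⟩; exact hmaxOn hz⟩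
  constructor
  · rintro ⟨h1, h2⟩
    constructor
    · -- ¬ local max gives a point with positive value
      by_contra hcon
      push_neg at hcon
      apply h2
      filter_upwards [closedBall_mem_nhds (0 : EuclideanSpace ℝ (Fin n)) hRpos] with y hy
      rw [hf0]
      calc evalP f y ≤ fmax f R := hfmaxE ▸ hmaxOn hy
        _ ≤ 0 := hcon
    · by_contra hcon
      push_neg at hcon
      apply h1
      filter_upwards [closedBall_mem_nhds (0 : EuclideanSpace ℝ (Fin n)) hRpos] with y hy
      rw [hf0]
      calc (0 : ℝ) ≤ fmin f R := hcon
        _ ≤ evalP f y := hfminE ▸ hminOn hy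
  · rintro ⟨hmaxpos, hminneg⟩
    have hfxm : evalP f xm < 0 := hfminE ▸ hminneg
    have hfxM : 0 < evalP f xM := hfmaxE ▸ hmaxpos
    have hxmG : xm ∈ Gamma f :=
      extr_mem_Gamma f hRpos hcrit hf0 hxm (Or.inl hminOn) (ne_of_lt hfxm)
    have hxMG : xM ∈ Gamma f :=
      extr_mem_Gamma f hRpos hcrit hf0 hxM (Or.inr hmaxOn) (ne_of_gt hfxM)
    have h0G : (0 : EuclideanSpace ℝ (Fin n)) ∈ Gamma f := ⟨0, by rw [hgrad, zero_smul]⟩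
    have h0K : (0 : EuclideanSpace ℝ (Fin n))
        ∈ Gamma f ∩ closedBall (0 : EuclideanSpace ℝ (Fin n)) R :=
      ⟨h0G, mem_closedBall_self hRpos.le⟩
    have hK := hconn.isPreconnected
    constructor
    · -- not a local min
      intro hlocmin
      have hev : ∀ᶠ y in nhds (0 : EuclideanSpace ℝ (Fin n)), 0 ≤ evalP f y := by
        filter_upwards [hlocmin] with y hy
        rw [hf0] at hy; exact hy
      obtain ⟨ε, hε, hball⟩ := Metric.eventually_nhds_iff_ball.1 hev
      obtain ⟨y, hyK, hyU, hyV⟩ := hK ({y | 0 < evalP f y} ∪ ball (0 : EuclideanSpace ℝ (Fin n)) ε)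
        {y | evalP f y < 0}
        ((isOpen_lt continuous_const hcont).union isOpen_ball)
        (isOpen_lt hcont continuous_const)
        (by
          intro y hyK
          rcases lt_trichotomy (evalP f y) 0 with h | h | h
          · exact Or.inr h
          · have : y ∈ Gamma f ∩ {x | evalP f x = 0}
                ∩ closedBall (0 : EuclideanSpace ℝ (Fin n)) R := ⟨⟨hyK.1, h⟩, hyK.2⟩
            rw [hfaith] at this
            rw [this]
            exact Or.inl (Or.inr (mem_ball_self hε))
          · exact Or.inl (Or.inl h))
        ⟨0, h0K, Or.inr (mem_ball_self hε)⟩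
        ⟨xm, ⟨hxmG, hxm⟩, hfxm⟩
      have hyV' : evalP f y < 0 := hyV
      rcases hyU with h | h
      · have h' : 0 < evalP f y := h
        linarith
      · have h' : 0 ≤ evalP f y := hball y h
        linarith
    · -- not a local max
      intro hlocmax
      have hev : ∀ᶠ y in nhds (0 : EuclideanSpace ℝ (Fin n)), evalP f y ≤ 0 := by
        filter_upwards [hlocmax] with y hy
        rw [hf0] at hy; exact hy
      obtain ⟨ε, hε, hball⟩ := Metric.eventually_nhds_iff_ball.1 hev
      obtain ⟨y, hyK, hyU, hyV⟩ := hK ({y | evalP f y < 0} ∪ ball (0 : EuclideanSpace ℝ (Fin n)) ε)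
        {y | 0 < evalP f y}
        ((isOpen_lt hcont continuous_const).union isOpen_ball)
        (isOpen_lt continuous_const hcont)
        (by
          intro y hyK
          rcases lt_trichotomy (evalP f y) 0 with h | h | h
          · exact Or.inl (Or.inl h)
          · have : y ∈ Gamma f ∩ {x | evalP f x = 0}
                ∩ closedBall (0 : EuclideanSpace ℝ (Fin n)) R := ⟨⟨hyK.1, h⟩, hyK.2⟩
            rw [hfaith] at this
            rw [this]
            exact Or.inl (Or.inr (mem_ball_self hε))
          · exact Or.inr h)
        ⟨0, h0K, Or.inr (mem_ball_self hε)⟩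
        ⟨xM, ⟨hxMG, hxM⟩, hfxM⟩
      have hyV' : 0 < evalP f y := hyV
      rcases hyU with h | h
      · have h' : evalP f y < 0 := h
        linarith
      · have h' : evalP f y ≤ 0 := hball y h
        linarith
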